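/- For n ≥ 0, the 2-matching complex of the clawed path CP_n (the clawed graph of the path of length n) is homotopy equivalent to the sphere S^{2n+1}. In particular, CP_n decomposes as a wedge (vertex-identification) of n+1 copies of K_{1,3}, and M₂(CP_n) is the (n+1)-fold join of copies of M₂(K_{1,3}) ≃ S¹. -/

import Mathlib

noncomputable section

/-- An abstract simplicial complex on vertex type `V` (faces include `∅`). -/
structure AbsSC (V : Type*) where
  faces : Set (Finset V)
  down_closed : ∀ ⦃σ τ : Finset V⦄, σ ∈ faces → τ ⊆ σ → τ ∈ faces

/-- Geometric realization of an abstract simplicial complex on a finite vertex set. -/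
def realization {V : Type*} [Fintype V] (K : AbsSC V) : Type _ :=
  {f : V → ℝ // (∀ v, 0 ≤ f v) ∧ (∑ v, f v) = 1 ∧ ∃ σ ∈ K.faces, ∀ v, f v ≠ 0 → v ∈ σ}

instance {V : Type*} [Fintype V] (K : AbsSC V) : TopologicalSpace (realization K) := by
  unfold realization; infer_instance

/-- The `n`-sphere. -/
def sphereSpace (n : ℕ) : Type := Metric.sphere (0 : EuclideanSpace ℝ (Fin (n+1))) 1

instance (n : ℕ) : TopologicalSpace (sphereSpace n) := by
  unfold sphereSpace; infer_instance

/-- A base point on the `n`-sphere. -/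
def basept (n : ℕ) : sphereSpace n :=
  ⟨EuclideanSpace.single 0 1, by
    simp [sphereSpace, EuclideanSpace.norm_single]⟩

/-- A wedge of `k` copies of the `n`-sphere (one-point union at the base points). -/
def wedgeSpheres (k n : ℕ) : Type :=
  Quot (fun a b : (Σ _ : Fin k, sphereSpace n) ⊕ Unit =>
    b = Sum.inr () ∧ ∃ i : Fin k, a = Sum.inl ⟨i, basept n⟩)

instance (k n : ℕ) : TopologicalSpace (wedgeSpheres k n) := by
  unfold wedgeSpheres; infer_instance

/-- `H` is a 2-matching of `G`: a set of edges of `G` such that every vertex is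
incident to at most 2 of them. -/
def IsTwoMatching {V : Type*} [DecidableEq V] (G : SimpleGraph V) (H : Finset (Sym2 V)) : Prop :=
  ↑H ⊆ G.edgeSet ∧ ∀ v : V, (H.filter (fun e => v ∈ e)).card ≤ 2

/-- `H` is a matching of `G`. -/
def IsMatchingSet {V : Type*} [DecidableEq V] (G : SimpleGraph V) (H : Finset (Sym2 V)) : Prop :=
  ↑H ⊆ G.edgeSet ∧ ∀ v : V, (H.filter (fun e => v ∈ e)).card ≤ 1

/-- The 2-matching complex `M₂(G)`. -/
def M2 {V : Type*} [DecidableEq V] (G : SimpleGraph V) : AbsSC (Sym2 V) where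
  faces := {H | IsTwoMatching G H}
  down_closed := by
    intro σ τ hσ hτ
    exact ⟨fun e he => hσ.1 (hτ he), fun v =>
      le_trans (Finset.card_le_card (Finset.filter_subset_filter _ hτ)) (hσ.2 v)⟩

/-- The matching complex `M₁(G)`. -/
def M1 {V : Type*} [DecidableEq V] (G : SimpleGraph V) : AbsSC (Sym2 V) where
  faces := {H | IsMatchingSet G H}
  down_closed := by
    intro σ τ hσ hτ
    exact ⟨fun e he => hσ.1 (hτ he), fun v =>
      le_trans (Finset.card_le_card (Finset.filter_subset_filter _ hτ)) (hσ.2 v)⟩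

/-- The independence complex of a graph. -/
def IndC {V : Type*} (G : SimpleGraph V) : AbsSC V where
  faces := {S | ∀ a ∈ S, ∀ b ∈ S, ¬ G.Adj a b}
  down_closed := by
    intro σ τ hσ hτ a ha b hb
    exact hσ a (hτ ha) b (hτ hb)


/-- The clawed path `CP_n`: `n+1` claws `K_{1,3}` glued consecutively at leaves.
Vertices: `inl i` are the `n+1` claw centers, `inr (inl i)` are the top leaves,
and `inr (inr j)` (for `j : Fin (n+2)`) are the in-between vertices; center `i`
is adjacent to its top leaf and to the in-between vertices `i` and `i+1`. -/
def clawedPath (n : ℕ) : SimpleGraph (Fin (n + 1) ⊕ Fin (n + 1) ⊕ Fin (n + 2)) :=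
  SimpleGraph.fromRel (fun a b =>
    match a, b with
    | Sum.inl i, Sum.inr (Sum.inl j) => i = j
    | Sum.inl i, Sum.inr (Sum.inr j) => (j : ℕ) = (i : ℕ) ∨ (j : ℕ) = (i : ℕ) + 1
    | _, _ => False)

namespace CPnProof

open Finset

variable (n : ℕ)

abbrev Vtx := Fin (n + 1) ⊕ Fin (n + 1) ⊕ Fin (n + 2)

/-- the non-center endpoint of the `j`-th edge of claw `i`. -/
def sec (i : Fin (n + 1)) (j : Fin 3) : Fin (n + 1) ⊕ Fin (n + 2) :=
  if j = 0 then Sum.inl i else if j = 1 then Sum.inr i.castSucc else Sum.inr i.succ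

/-- the `j`-th edge of claw `i`. -/
def Edg (i : Fin (n + 1)) (j : Fin 3) : Sym2 (Vtx n) :=
  s(Sum.inl i, Sum.inr (sec n i j))

lemma sec_inj {i : Fin (n+1)} {j j' : Fin 3} (h : sec n i j = sec n i j') : j = j' := by
  fin_cases j <;> fin_cases j' <;>
    simp_all [sec, Fin.ext_iff] <;> omega

lemma Edg_inj {i i' : Fin (n+1)} {j j' : Fin 3} (h : Edg n i j = Edg n i' j') :
    i = i' ∧ j = j' := by
  rw [Edg, Edg, Sym2.eq_iff] at h
  rcases h with ⟨h1, h2⟩ | ⟨h1, h2⟩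
  · obtain rfl : i = i' := by simpa using h1
    exact ⟨rfl, sec_inj n (by simpa using h2)⟩
  · simp at h1

lemma Edg_mk_inj : Function.Injective (fun p : Fin (n+1) × Fin 3 => Edg n p.1 p.2) := by
  rintro ⟨i, j⟩ ⟨i', j'⟩ h
  obtain ⟨rfl, rfl⟩ := Edg_inj n h
  rfl

lemma Edg_mem_edgeSet (i : Fin (n+1)) (j : Fin 3) : Edg n i j ∈ (clawedPath n).edgeSet := by
  rw [Edg, SimpleGraph.mem_edgeSet, clawedPath, SimpleGraph.fromRel_adj]
  refine ⟨by fin_cases j <;> simp [sec], Or.inl ?_⟩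
  fin_cases j
  · exact rfl
  · exact Or.inl (Fin.coe_castSucc i)
  · exact Or.inr (Fin.val_succ i)

lemma mem_edgeSet_iff (e : Sym2 (Vtx n)) :
    e ∈ (clawedPath n).edgeSet ↔ ∃ i j, e = Edg n i j := by
  constructor
  · induction e using Sym2.ind with
    | _ x y =>
      rw [SimpleGraph.mem_edgeSet, clawedPath, SimpleGraph.fromRel_adj]
      rintro ⟨hne, h | h⟩
      · rcases x with i | i | i
        · rcases y with j | j | j
          · exact h.elim
          · obtain rfl : i = j := h
            exact ⟨i, 0, by simp [Edg, sec]⟩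
          · rcases (h : (j:ℕ) = i ∨ (j:ℕ) = i + 1) with h' | h'
            · exact ⟨i, 1, by
                have : j = i.castSucc := Fin.ext (by simpa using h')
                simp [Edg, sec, this]⟩
            · exact ⟨i, 2, by
                have : j = i.succ := Fin.ext (by simpa using h')
                simp [Edg, sec, this]⟩
        · exact h.elim
        · exact h.elim
      · rcases y with j | j | j
        · rcases x with i | i | i
          · exact h.elim
          · obtain rfl : j = i := h
            exact ⟨j, 0, by rw [Sym2.eq_swap]; simp [Edg, sec]⟩
          · rcases (h : (i:ℕ) = j ∨ (i:ℕ) = j + 1) with h' | h'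
            · exact ⟨j, 1, by
                have : i = j.castSucc := Fin.ext (by simpa using h')
                rw [Sym2.eq_swap]; simp [Edg, sec, this]⟩
            · exact ⟨j, 2, by
                have : i = j.succ := Fin.ext (by simpa using h')
                rw [Sym2.eq_swap]; simp [Edg, sec, this]⟩
        · exact h.elim
        · exact h.elim
  · rintro ⟨i, j, rfl⟩
    exact Edg_mem_edgeSet n i j

lemma center_mem_Edg {i i' : Fin (n+1)} {j : Fin 3} :
    (Sum.inl i : Vtx n) ∈ Edg n i' j ↔ i = i' := by
  fin_cases j <;> simp [Edg, sec, Sym2.mem_iff]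

lemma top_mem_Edg {i i' : Fin (n+1)} {j : Fin 3} :
    (Sum.inr (Sum.inl i) : Vtx n) ∈ Edg n i' j ↔ i = i' ∧ j = 0 := by
  fin_cases j <;> simp [Edg, sec, Sym2.mem_iff]

lemma mid_mem_Edg {k : Fin (n+2)} {i : Fin (n+1)} {j : Fin 3} :
    (Sum.inr (Sum.inr k) : Vtx n) ∈ Edg n i j ↔ (j = 1 ∧ i.castSucc = k) ∨ (j = 2 ∧ i.succ = k) := by
  fin_cases j <;> simp [Edg, sec, Sym2.mem_iff, eq_comm]

/-! ### numeric maps -/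

def uIdx (i : Fin (n+1)) : Fin (2*n+1+1) := ⟨2*i.val, by have := i.isLt; omega⟩
def vIdx (i : Fin (n+1)) : Fin (2*n+1+1) := ⟨2*i.val+1, by have := i.isLt; omega⟩
def gi (k : Fin (2*n+1+1)) : Fin (n+1) := ⟨k.val / 2, by have := k.isLt; omega⟩
def gj (k : Fin (2*n+1+1)) : Fin 3 := ⟨k.val % 2, by omega⟩

lemma gi_uIdx (i : Fin (n+1)) : gi n (uIdx n i) = i := Fin.ext (by simp [gi, uIdx]; try omega)
lemma gj_uIdx (i : Fin (n+1)) : gj n (uIdx n i) = 0 := Fin.ext (by simp [gj, uIdx]; try omega)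
lemma gi_vIdx (i : Fin (n+1)) : gi n (vIdx n i) = i := Fin.ext (by simp [gi, vIdx]; try omega)
lemma gj_vIdx (i : Fin (n+1)) : gj n (vIdx n i) = 1 := Fin.ext (by simp [gj, vIdx]; try omega)
lemma uIdx_gi {k : Fin (2*n+1+1)} (h : k.val % 2 = 0) : uIdx n (gi n k) = k :=
  Fin.ext (by simp [uIdx, gi]; omega)
lemma vIdx_gi {k : Fin (2*n+1+1)} (h : k.val % 2 = 1) : vIdx n (gi n k) = k :=
  Fin.ext (by simp [vIdx, gi]; omega)
lemma gj_eq_zero {k : Fin (2*n+1+1)} (h : k.val % 2 = 0) : gj n k = 0 := Fin.ext (by simp [gj, h])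
lemma gj_eq_one {k : Fin (2*n+1+1)} (h : k.val % 2 = 1) : gj n k = 1 := Fin.ext (by simp [gj, h])

abbrev Euc := EuclideanSpace ℝ (Fin (2*n+1+1))

def mv (z : Euc n) (i : Fin (n+1)) : ℝ :=
  max 0 (max (-(z (uIdx n i))) (-(z (vIdx n i))))

def cc (z : Euc n) (i : Fin (n+1)) (j : Fin 3) : ℝ :=
  if j = 0 then z (uIdx n i) + mv n z i
  else if j = 1 then z (vIdx n i) + mv n z i
  else mv n z i

lemma cc_zero' (z i) : cc n z i 0 = z (uIdx n i) + mv n z i := rfl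
lemma cc_one' (z i) : cc n z i 1 = z (vIdx n i) + mv n z i := rfl
lemma cc_two' (z i) : cc n z i 2 = mv n z i := rfl

lemma cc_nonneg (z i j) : 0 ≤ cc n z i j := by
  have h1 : -(z (uIdx n i)) ≤ mv n z i := le_trans (le_max_left _ _) (le_max_right _ _)
  have h2 : -(z (vIdx n i)) ≤ mv n z i := le_trans (le_max_right _ _) (le_max_right _ _)
  have h0 : (0:ℝ) ≤ mv n z i := le_max_left _ _
  fin_cases j <;> simp [cc] <;> linarith

lemma cc_exists_zero (z i) : ∃ j, cc n z i j = 0 := by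
  set u := z (uIdx n i) with hu
  set v := z (vIdx n i) with hv
  rcases le_total (max (-u) (-v)) 0 with h | h
  · exact ⟨2, by rw [cc_two', mv, max_eq_left h]⟩
  · have hm : mv n z i = max (-u) (-v) := max_eq_right h
    rcases max_choice (-u) (-v) with h' | h'
    · exact ⟨0, by rw [cc_zero', hm, h']; ring⟩
    · exact ⟨1, by rw [cc_one', hm, h']; ring⟩

lemma cc_smul (t : ℝ) (ht : 0 ≤ t) (z i j) : cc n (t • z) i j = t * cc n z i j := by
  have hz : ∀ k, (t • z : Euc n) k = t * z k := fun k => rfl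
  have hm : mv n (t • z) i = t * mv n z i := by
    rw [mv, mv, hz, hz, mul_max_of_nonneg _ _ ht, mul_max_of_nonneg _ _ ht,
      mul_zero, mul_neg, mul_neg]
  fin_cases j <;> simp [cc, hm, hz] <;> ring

lemma cc_zero_fun (i j) : cc n 0 i j = 0 := by
  have h0 : ∀ k, (0 : Euc n) k = 0 := fun k => rfl
  have hm : mv n 0 i = 0 := by simp [mv, h0]
  fin_cases j <;> simp [cc, hm, h0]

def NN (z : Euc n) : ℝ := ∑ p : Fin (n+1) × Fin 3, cc n z p.1 p.2

lemma NN_nonneg (z) : 0 ≤ NN n z := Finset.sum_nonneg fun p _ => cc_nonneg n z p.1 p.2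

lemma NN_smul (t : ℝ) (ht : 0 ≤ t) (z) : NN n (t • z) = t * NN n z := by
  rw [NN, NN, Finset.mul_sum]
  exact Finset.sum_congr rfl fun p _ => cc_smul n t ht z p.1 p.2

def Gm (z : Euc n) : Sym2 (Vtx n) → ℝ := fun e =>
  ∑ p : Fin (n+1) × Fin 3, if e = Edg n p.1 p.2 then cc n z p.1 p.2 else 0

lemma Gm_edge (z i j) : Gm n z (Edg n i j) = cc n z i j := by
  rw [Gm, Finset.sum_eq_single (⟨i, j⟩ : Fin (n+1) × Fin 3)]
  · simp
  · rintro ⟨i', j'⟩ - hne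
    rw [if_neg]
    intro h
    obtain ⟨rfl, rfl⟩ := Edg_inj n h.symm
    exact hne rfl
  · simp

lemma Gm_nonedge (z) {e} (h : ∀ i j, e ≠ Edg n i j) : Gm n z e = 0 := by
  rw [Gm]
  exact Finset.sum_eq_zero fun p _ => if_neg (h p.1 p.2)

lemma Gm_nonneg (z e) : 0 ≤ Gm n z e := by
  refine Finset.sum_nonneg fun p _ => ?_
  split
  · exact cc_nonneg n z p.1 p.2
  · exact le_refl 0

lemma sum_Gm (z) : ∑ e : Sym2 (Vtx n), Gm n z e = NN n z := by
  unfold Gm NN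
  rw [Finset.sum_comm]
  refine Finset.sum_congr rfl fun p _ => ?_
  simp

def Fm (f : Sym2 (Vtx n) → ℝ) : Euc n := WithLp.toLp 2 fun k =>
  f (Edg n (gi n k) (gj n k)) - f (Edg n (gi n k) 2)

lemma Fm_Gm (z : Euc n) : Fm n (Gm n z) = z := by
  refine PiLp.ext fun k => ?_
  show Gm n z (Edg n (gi n k) (gj n k)) - Gm n z (Edg n (gi n k) 2) = z k
  rw [Gm_edge, Gm_edge]
  rcases Nat.mod_two_eq_zero_or_one k.val with h | h
  · rw [gj_eq_zero n h, cc_zero', cc_two', uIdx_gi n h]; ring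
  · rw [gj_eq_one n h, cc_one', cc_two', vIdx_gi n h]; ring

lemma recover_mv {a b c : ℝ} (ha : 0 ≤ a) (hb : 0 ≤ b) (hc : 0 ≤ c)
    (h : a = 0 ∨ b = 0 ∨ c = 0) :
    max 0 (max (-(a - c)) (-(b - c))) = c := by
  rcases h with h | h | h <;> subst h <;>
    rw [max_def, max_def] <;> split_ifs <;> linarith

lemma exists_f_zero {f : Sym2 (Vtx n) → ℝ}
    (hσ : ∃ σ ∈ (M2 (clawedPath n)).faces, ∀ v, f v ≠ 0 → v ∈ σ) (i : Fin (n+1)) :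
    ∃ j, f (Edg n i j) = 0 := by
  obtain ⟨σ, hfaces, hsupp⟩ := hσ
  by_contra hcon
  push_neg at hcon
  have hmem : ∀ j : Fin 3, Edg n i j ∈ σ.filter (fun e => (Sum.inl i : Vtx n) ∈ e) := fun j =>
    Finset.mem_filter.2 ⟨hsupp _ (hcon j), (center_mem_Edg n).2 rfl⟩
  have hne01 : Edg n i 0 ≠ Edg n i 1 := fun h => absurd (Edg_inj n h).2 (by decide)
  have hne02 : Edg n i 0 ≠ Edg n i 2 := fun h => absurd (Edg_inj n h).2 (by decide)
  have hne12 : Edg n i 1 ≠ Edg n i 2 := fun h => absurd (Edg_inj n h).2 (by decide)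
  have hsub : ({Edg n i 0, Edg n i 1, Edg n i 2} : Finset (Sym2 (Vtx n))) ⊆
      σ.filter (fun e => (Sum.inl i : Vtx n) ∈ e) := by
    intro e he
    simp only [Finset.mem_insert, Finset.mem_singleton] at he
    rcases he with rfl | rfl | rfl
    exacts [hmem 0, hmem 1, hmem 2]
  have hcard : ({Edg n i 0, Edg n i 1, Edg n i 2} : Finset (Sym2 (Vtx n))).card = 3 := by
    rw [Finset.card_insert_of_notMem (by simp [hne01, hne02]),
        Finset.card_insert_of_notMem (by simp [hne12]), Finset.card_singleton]
  have h2 := hfaces.2 (Sum.inl i)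
  have h3 := Finset.card_le_card hsub
  rw [hcard] at h3
  exact absurd (le_trans h3 h2) (by norm_num)

lemma Gm_Fm {f : Sym2 (Vtx n) → ℝ} (h0 : ∀ v, 0 ≤ f v)
    (hσ : ∃ σ ∈ (M2 (clawedPath n)).faces, ∀ v, f v ≠ 0 → v ∈ σ) :
    Gm n (Fm n f) = f := by
  obtain ⟨σ, hfaces, hsupp⟩ := hσ
  funext e
  by_cases he : ∃ i j, e = Edg n i j
  · obtain ⟨i, j, rfl⟩ := he
    rw [Gm_edge]
    have hu : Fm n f (uIdx n i) = f (Edg n i 0) - f (Edg n i 2) := by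
      show f (Edg n (gi n (uIdx n i)) (gj n (uIdx n i))) - f (Edg n (gi n (uIdx n i)) 2) = _
      rw [gi_uIdx, gj_uIdx]
    have hv : Fm n f (vIdx n i) = f (Edg n i 1) - f (Edg n i 2) := by
      show f (Edg n (gi n (vIdx n i)) (gj n (vIdx n i))) - f (Edg n (gi n (vIdx n i)) 2) = _
      rw [gi_vIdx, gj_vIdx]
    have hz : f (Edg n i 0) = 0 ∨ f (Edg n i 1) = 0 ∨ f (Edg n i 2) = 0 := by
      obtain ⟨j', hj'⟩ := exists_f_zero n ⟨σ, hfaces, hsupp⟩ i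
      fin_cases j'
      · exact Or.inl hj'
      · exact Or.inr (Or.inl hj')
      · exact Or.inr (Or.inr hj')
    have hm : mv n (Fm n f) i = f (Edg n i 2) := by
      rw [mv, hu, hv]
      exact recover_mv (h0 _) (h0 _) (h0 _) hz
    have e0 : cc n (Fm n f) i 0 = f (Edg n i 0) := by rw [cc_zero', hu, hm]; ring
    have e1 : cc n (Fm n f) i 1 = f (Edg n i 1) := by rw [cc_one', hv, hm]; ring
    have e2 : cc n (Fm n f) i 2 = f (Edg n i 2) := by rw [cc_two', hm]
    fin_cases j
    · exact e0
    · exact e1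
    · exact e2
  · push_neg at he
    rw [Gm_nonedge n _ he]
    by_contra hfe
    have hin : e ∈ (clawedPath n).edgeSet := hfaces.1 (hsupp e fun h => hfe h.symm)
    obtain ⟨i, j, hij⟩ := (mem_edgeSet_iff n e).1 hin
    exact he i j hij

lemma NN_zero_fun : NN n 0 = 0 := by
  unfold NN
  exact Finset.sum_eq_zero fun p _ => cc_zero_fun n p.1 p.2

lemma eq_zero_of_NN {z : Euc n} (h : NN n z = 0) : z = 0 := by
  have hcc : ∀ p : Fin (n+1) × Fin 3, cc n z p.1 p.2 = 0 := fun p =>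
    (Finset.sum_eq_zero_iff_of_nonneg (fun p _ => cc_nonneg n z p.1 p.2)).1 h p (Finset.mem_univ p)
  refine PiLp.ext fun k => ?_
  have hk : Fm n (Gm n z) k = z k := congrArg (fun w : Euc n => w k) (Fm_Gm n z)
  have h0 : Fm n (Gm n z) k = 0 := by
    show Gm n z (Edg n (gi n k) (gj n k)) - Gm n z (Edg n (gi n k) 2) = 0
    rw [Gm_edge, Gm_edge, hcc ⟨_, _⟩, hcc ⟨_, _⟩, sub_zero]
  exact hk.symm.trans h0

lemma NN_pos {z : Euc n} (hz : z ≠ 0) : 0 < NN n z :=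
  lt_of_le_of_ne (NN_nonneg n z) fun h => hz (eq_zero_of_NN n h.symm)

lemma Gm_support_face (z : Euc n) :
    ∃ σ ∈ (M2 (clawedPath n)).faces, ∀ e, Gm n z e ≠ 0 → e ∈ σ := by
  classical
  refine ⟨Finset.univ.filter (fun e => e ∈ (clawedPath n).edgeSet ∧ Gm n z e ≠ 0), ⟨?_, ?_⟩, ?_⟩
  · intro e he
    exact (Finset.mem_filter.1 he).2.1
  · intro v
    rcases v with i | i | k
    · obtain ⟨j₀, hj₀⟩ := cc_exists_zero n z i
      have hsub : (Finset.univ.filter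
            (fun e => e ∈ (clawedPath n).edgeSet ∧ Gm n z e ≠ 0)).filter
            (fun e => (Sum.inl i : Vtx n) ∈ e) ⊆
          (Finset.univ.erase j₀).image (fun j => Edg n i j) := by
        intro e he
        rw [Finset.mem_filter] at he
        obtain ⟨he1, hecenter⟩ := he
        rw [Finset.mem_filter] at he1
        obtain ⟨-, heedge, hene⟩ := he1
        obtain ⟨i', j', rfl⟩ := (mem_edgeSet_iff n e).1 heedge
        obtain rfl : i = i' := (center_mem_Edg n).1 hecenter
        refine Finset.mem_image.2 ⟨j', Finset.mem_erase.2 ⟨?_, Finset.mem_univ _⟩, rfl⟩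
        intro hjj
        rw [Gm_edge, hjj, hj₀] at hene
        exact hene rfl
      refine le_trans (Finset.card_le_card hsub) (le_trans Finset.card_image_le ?_)
      rw [Finset.card_erase_of_mem (Finset.mem_univ _)]
      simp
    · have hsub : (Finset.univ.filter
            (fun e => e ∈ (clawedPath n).edgeSet ∧ Gm n z e ≠ 0)).filter
            (fun e => (Sum.inr (Sum.inl i) : Vtx n) ∈ e) ⊆ {Edg n i 0} := by
        intro e he
        rw [Finset.mem_filter] at he
        obtain ⟨he1, hemem⟩ := he
        rw [Finset.mem_filter] at he1
        obtain ⟨i', j', rfl⟩ := (mem_edgeSet_iff n e).1 he1.2.1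
        obtain ⟨rfl, rfl⟩ := (top_mem_Edg n).1 hemem
        exact Finset.mem_singleton_self _
      exact le_trans (Finset.card_le_card hsub) (by simp)
    · have hsub : (Finset.univ.filter
            (fun e => e ∈ (clawedPath n).edgeSet ∧ Gm n z e ≠ 0)).filter
            (fun e => (Sum.inr (Sum.inr k) : Vtx n) ∈ e) ⊆
          ((Finset.univ.filter (fun i : Fin (n+1) => i.castSucc = k)).image (fun i => Edg n i 1)) ∪
          ((Finset.univ.filter (fun i : Fin (n+1) => i.succ = k)).image (fun i => Edg n i 2)) := by
        intro e he
        rw [Finset.mem_filter] at he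
        obtain ⟨he1, hemem⟩ := he
        rw [Finset.mem_filter] at he1
        obtain ⟨i', j', rfl⟩ := (mem_edgeSet_iff n e).1 he1.2.1
        rcases (mid_mem_Edg n).1 hemem with ⟨rfl, hc⟩ | ⟨rfl, hc⟩
        · exact Finset.mem_union_left _
            (Finset.mem_image.2 ⟨i', Finset.mem_filter.2 ⟨Finset.mem_univ _, hc⟩, rfl⟩)
        · exact Finset.mem_union_right _
            (Finset.mem_image.2 ⟨i', Finset.mem_filter.2 ⟨Finset.mem_univ _, hc⟩, rfl⟩)
      have h1 : (Finset.univ.filter (fun i : Fin (n+1) => i.castSucc = k)).card ≤ 1 := by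
        refine Finset.card_le_one.2 fun a ha b hb => ?_
        rw [Finset.mem_filter] at ha hb
        exact Fin.castSucc_injective _ (ha.2.trans hb.2.symm)
      have h2 : (Finset.univ.filter (fun i : Fin (n+1) => i.succ = k)).card ≤ 1 := by
        refine Finset.card_le_one.2 fun a ha b hb => ?_
        rw [Finset.mem_filter] at ha hb
        exact Fin.succ_injective _ (ha.2.trans hb.2.symm)
      refine le_trans (Finset.card_le_card hsub) (le_trans (Finset.card_union_le _ _) ?_)
      have i1 := le_trans (Finset.card_image_le (f := fun i : Fin (n+1) => Edg n i 1)
        (s := Finset.univ.filter (fun i : Fin (n+1) => i.castSucc = k))) h1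
      have i2 := le_trans (Finset.card_image_le (f := fun i : Fin (n+1) => Edg n i 2)
        (s := Finset.univ.filter (fun i : Fin (n+1) => i.succ = k))) h2
      omega
  · intro e hne
    by_cases hedge : ∃ i j, e = Edg n i j
    · obtain ⟨i, j, rfl⟩ := hedge
      exact Finset.mem_filter.2 ⟨Finset.mem_univ _, Edg_mem_edgeSet n i j, hne⟩
    · push_neg at hedge
      exact absurd (Gm_nonedge n z hedge) hne

abbrev Rtype : Type _ := {f : Sym2 (Vtx n) → ℝ // (∀ v, 0 ≤ f v) ∧ (∑ v, f v) = 1 ∧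
  ∃ σ ∈ (M2 (clawedPath n)).faces, ∀ v, f v ≠ 0 → v ∈ σ}

lemma NN_Fm (x : Rtype n) : NN n (Fm n x.1) = 1 := by
  rw [← sum_Gm, Gm_Fm n x.2.1 x.2.2.2]
  exact x.2.2.1

lemma Fm_ne_zero (x : Rtype n) : Fm n x.1 ≠ 0 := by
  intro h
  have h1 := NN_Fm n x
  rw [h, NN_zero_fun] at h1
  exact zero_ne_one h1

lemma sphere_ne_zero (z : Metric.sphere (0 : Euc n) 1) : (z : Euc n) ≠ 0 := by
  intro h
  have := mem_sphere_zero_iff_norm.1 z.2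
  rw [h, norm_zero] at this
  exact zero_ne_one this

def mainHomeo : Rtype n ≃ₜ Metric.sphere (0 : Euc n) 1 where
  toFun x := ⟨‖Fm n x.1‖⁻¹ • Fm n x.1, by
    rw [mem_sphere_zero_iff_norm]
    exact norm_smul_inv_norm (Fm_ne_zero n x)⟩
  invFun z := ⟨Gm n ((NN n (z : Euc n))⁻¹ • (z : Euc n)),
    fun e => Gm_nonneg n _ e,
    by
      rw [sum_Gm, NN_smul n _ (inv_nonneg.2 (NN_nonneg n _)) _,
        inv_mul_cancel₀ (NN_pos n (sphere_ne_zero n z)).ne'],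
    Gm_support_face n _⟩
  left_inv x := by
    apply Subtype.ext
    show Gm n _ = x.1
    have hF1 : NN n (Fm n x.1) = 1 := NN_Fm n x
    have hFne : Fm n x.1 ≠ 0 := Fm_ne_zero n x
    have hNy : NN n (‖Fm n x.1‖⁻¹ • Fm n x.1) = ‖Fm n x.1‖⁻¹ := by
      rw [NN_smul n _ (inv_nonneg.2 (norm_nonneg _)), hF1, mul_one]
    rw [hNy, inv_inv, smul_smul, mul_inv_cancel₀ (norm_ne_zero_iff.2 hFne), one_smul]
    exact Gm_Fm n x.2.1 x.2.2.2
  right_inv z := by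
    apply Subtype.ext
    show ‖Fm n (Gm n _)‖⁻¹ • Fm n (Gm n _) = (z : Euc n)
    rw [Fm_Gm n]
    have hpos : 0 < NN n (z : Euc n) := NN_pos n (sphere_ne_zero n z)
    have hnz : ‖(z : Euc n)‖ = 1 := mem_sphere_zero_iff_norm.1 z.2
    have hw : ‖(NN n (z : Euc n))⁻¹ • (z : Euc n)‖ = (NN n (z : Euc n))⁻¹ := by
      rw [norm_smul, norm_inv, Real.norm_eq_abs, abs_of_pos hpos, hnz, mul_one]
    rw [hw, inv_inv, smul_smul, mul_inv_cancel₀ hpos.ne', one_smul]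
  continuous_toFun := by
    refine Continuous.subtype_mk ?_ _
    have hF : Continuous fun x : Rtype n => Fm n x.1 :=
      (PiLp.continuous_toLp 2 (fun _ : Fin (2*n+1+1) => ℝ)).comp
        (continuous_pi fun k =>
          (((continuous_apply (Edg n (gi n k) (gj n k))).comp continuous_subtype_val).sub
            ((continuous_apply (Edg n (gi n k) 2)).comp continuous_subtype_val)))
    exact (hF.norm.inv₀ fun x => norm_ne_zero_iff.2 (Fm_ne_zero n x)).smul hF
  continuous_invFun := by
    refine Continuous.subtype_mk ?_ _
    have happ : ∀ k, Continuous fun w : Euc n => w k := fun k =>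
      (continuous_apply k).comp (PiLp.continuous_ofLp 2 (fun _ : Fin (2*n+1+1) => ℝ))
    have hmv : ∀ i, Continuous fun w : Euc n => mv n w i := fun i =>
      continuous_const.max (((happ _).neg).max ((happ _).neg))
    have hcc : ∀ i j, Continuous fun w : Euc n => cc n w i j := by
      intro i j
      unfold cc
      split_ifs
      exacts [(happ _).add (hmv i), (happ _).add (hmv i), hmv i]
    have hNN : Continuous (NN n) := by
      unfold NN
      exact continuous_finset_sum _ fun p _ => hcc p.1 p.2
    have hw : Continuous fun z : Metric.sphere (0 : Euc n) 1 =>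
        (NN n (z : Euc n))⁻¹ • (z : Euc n) :=
      ((hNN.comp continuous_subtype_val).inv₀
        fun z => (NN_pos n (sphere_ne_zero n z)).ne').smul continuous_subtype_val
    refine continuous_pi fun e => ?_
    have hGm : Continuous fun w : Euc n => Gm n w e := by
      unfold Gm
      refine continuous_finset_sum _ fun p _ => ?_
      split_ifs
      exacts [hcc p.1 p.2, continuous_const]
    exact hGm.comp hw

end CPnProof



/-- `M₂(CP_n) ≃ S^{2n+1}`. -/
theorem stmt_7 (n : ℕ) :
    Nonempty (ContinuousMap.HomotopyEquiv (realization (M2 (clawedPath n)))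
      (sphereSpace (2 * n + 1))) := by
  exact ⟨(CPnProof.mainHomeo n).toHomotopyEquiv⟩

end
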